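/- Every element of G admits a minimal length representative word in the generators a, b, b⁻¹ of the form w = b^{ε₁}(ab)^{p₁}(ab⁻¹)^{q₁}(ab)^{p₂}(ab⁻¹)^{q₂}⋯(ab)^{p_k}(ab⁻¹)^{q_k}a^{ε₂}, with ε₁, ε₂ ∈ {-1,0,1}, where moreover all positive integers pᵢ, qᵢ (possibly p₁ or q_k being zero) are at most 7, with the only exceptions being the four words (ab)^8, (ba)^8, (b⁻¹a)^8 and (ab⁻¹)^8. -/

import Mathlib

/-!
Setup: the automorphism group `Aut(T₈)` of the rooted 8-regular tree, realized
as the group of *portraits*: an automorphism is determined by the permutation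
of `{1,…,8}` (here `Fin 8`) that it induces below each vertex (a finite word
over the alphabet).  Composition is written left-to-right: `p * q` acts by
first applying `p`, then `q` (this is the convention of the paper, where a
word `a b a b⁻¹ a` acts by applying `a` first).
-/

namespace T8

/-- The root permutation of the generator `a` : `(34)(67)(58)` on letters
`1,…,8`, written `0`-indexed on `Fin 8` as `(2 3)(5 6)(4 7)`. -/
def σa : Equiv.Perm (Fin 8) := Equiv.swap 2 3 * Equiv.swap 5 6 * Equiv.swap 4 7

/-- The root permutation of the generator `b` : `(123)(456)` on letters
`1,…,8`, written `0`-indexed on `Fin 8` as `(0 1 2)(3 4 5)`. -/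
def σb : Equiv.Perm (Fin 8) :=
  (Equiv.swap 0 1 * Equiv.swap 1 2) * (Equiv.swap 3 4 * Equiv.swap 4 5)

/-- An automorphism of the rooted `8`-regular tree, given by its portrait:
for each vertex `v` (a finite word over the `8`-letter alphabet), the
permutation induced on the letters just below `v`. -/
@[ext] structure Aut where
  val : List (Fin 8) → Equiv.Perm (Fin 8)

/-- The section (state) of a tree automorphism at a first-level vertex `i`. -/
def sect (p : Aut) (i : Fin 8) : Aut := ⟨fun v => p.val (i :: v)⟩

/-- The section of a tree automorphism at an arbitrary vertex (word) `v`. -/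
def sectWord (p : Aut) : List (Fin 8) → Aut
  | [] => p
  | i :: t => sectWord (sect p i) t

/-- The action of a tree automorphism on vertices:
`p (i·w) = (σ_p i) · (p_i w)` where `σ_p = p.val []` is the root permutation
and `p_i` is the section at `i`.  This is length- and prefix-preserving. -/
def act : Aut → List (Fin 8) → List (Fin 8)
  | _, [] => []
  | p, i :: t => p.val [] i :: act (sect p i) t

/-- The action of the inverse of a tree automorphism on vertices. -/
def actInv : Aut → List (Fin 8) → List (Fin 8)
  | _, [] => []
  | p, i :: t => (p.val [])⁻¹ i :: actInv (sect p ((p.val [])⁻¹ i)) t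

instance : One Aut := ⟨⟨fun _ => 1⟩⟩
instance : Mul Aut := ⟨fun p q => ⟨fun v => q.val (act p v) * p.val v⟩⟩
instance : Inv Aut := ⟨fun p => ⟨fun v => (p.val (actInv p v))⁻¹⟩⟩

@[simp] lemma one_val (v : List (Fin 8)) : (1 : Aut).val v = 1 := rfl
@[simp] lemma mul_val (p q : Aut) (v : List (Fin 8)) :
    (p * q).val v = q.val (act p v) * p.val v := rfl
@[simp] lemma inv_val (p : Aut) (v : List (Fin 8)) :
    (p⁻¹).val v = (p.val (actInv p v))⁻¹ := rfl

@[simp] lemma sect_one (i : Fin 8) : sect 1 i = 1 := rfl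

lemma sect_mul (p q : Aut) (i : Fin 8) :
    sect (p * q) i = sect p i * sect q (p.val [] i) := rfl

lemma sect_inv (p : Aut) (i : Fin 8) :
    sect p⁻¹ i = (sect p ((p.val [])⁻¹ i))⁻¹ := rfl

lemma act_one : ∀ v : List (Fin 8), act (1 : Aut) v = v
  | [] => rfl
  | i :: t => by
    show (1 : Equiv.Perm (Fin 8)) i :: act (sect 1 i) t = i :: t
    rw [sect_one, act_one t, Equiv.Perm.one_apply]

lemma act_mul : ∀ (v : List (Fin 8)) (p q : Aut),
    act (p * q) v = act q (act p v)
  | [], _, _ => rfl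
  | i :: t, p, q => by
    show (p * q).val [] i :: act (sect (p * q) i) t
        = act q (p.val [] i :: act (sect p i) t)
    rw [sect_mul, act_mul t]
    show (q.val (act p []) * p.val []) i :: _
        = q.val [] (p.val [] i) :: act (sect q (p.val [] i)) (act (sect p i) t)
    rfl

lemma act_inv : ∀ (v : List (Fin 8)) (p : Aut), act p⁻¹ v = actInv p v
  | [], _ => rfl
  | i :: t, p => by
    show (p⁻¹).val [] i :: act (sect p⁻¹ i) t
        = (p.val [])⁻¹ i :: actInv (sect p ((p.val [])⁻¹ i)) t
    rw [sect_inv, act_inv t]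
    rfl

lemma actInv_act : ∀ (v : List (Fin 8)) (p : Aut), actInv p (act p v) = v
  | [], _ => rfl
  | i :: t, p => by
    show (p.val [])⁻¹ (p.val [] i) ::
        actInv (sect p ((p.val [])⁻¹ (p.val [] i))) (act (sect p i) t) = i :: t
    rw [show (p.val [])⁻¹ (p.val [] i) = i from (p.val []).symm_apply_apply i, actInv_act t]

lemma act_actInv : ∀ (v : List (Fin 8)) (p : Aut), act p (actInv p v) = v
  | [], _ => rfl
  | i :: t, p => by
    show p.val [] ((p.val [])⁻¹ i) ::
        act (sect p ((p.val [])⁻¹ i)) (actInv (sect p ((p.val [])⁻¹ i)) t) = i :: t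
    rw [show p.val [] ((p.val [])⁻¹ i) = i from (p.val []).apply_symm_apply i, act_actInv t]

instance : Group Aut where
  mul_assoc p q r := by
    ext v i
    simp [mul_val, act_mul, mul_assoc]
  one_mul p := by
    ext v i
    simp [mul_val, act_one]
  mul_one p := by
    ext v i
    simp [mul_val]
  inv_mul_cancel p := by
    ext v i
    simp [mul_val, inv_val, act_inv, actInv_act]

/-- The portrait of the generator `a = ⟨a, 1, 1, 1, 1, 1, 1, 1⟩ (34)(67)(58)`:
root permutation `σa`, section `a` at the first letter, trivial sections
elsewhere. -/
def aval : List (Fin 8) → Equiv.Perm (Fin 8)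
  | [] => σa
  | i :: t => if i = 0 then aval t else 1

/-- The generator `a = ⟨a, 1, 1, 1, 1, 1, 1, 1⟩ (34)(67)(58)`. -/
def a : Aut := ⟨aval⟩

/-- The portraits of the generator `b` (for `tt`) and of `b⁻¹` (for `ff`):
`b = ⟨1, 1, 1, 1, 1, 1, b, b⁻¹⟩ (123)(456)` and
`b⁻¹ = ⟨1, 1, 1, 1, 1, 1, b⁻¹, b⟩ (132)(465)`. -/
def bval : Bool → List (Fin 8) → Equiv.Perm (Fin 8)
  | s, [] => if s then σb else σb⁻¹
  | s, i :: t => if i = 6 then bval s t else if i = 7 then bval (!s) t else 1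

/-- The generator `b = ⟨1, 1, 1, 1, 1, 1, b, b⁻¹⟩ (123)(456)`. -/
def b : Aut := ⟨bval true⟩

/-- Sanity: the first section of `a` is `a` itself. -/
lemma sect_a_zero : sect a 0 = a := rfl

/-- Sanity: the section of `b` at the letter `7` (index `6`) is `b` itself. -/
lemma sect_b_six : sect b 6 = b := rfl

/-- The group `G = ⟨a, b⟩ = ⟨a, b, b⁻¹⟩ ≤ Aut(T₈)` of the paper. -/
def G : Subgroup Aut := Subgroup.closure {a, b}

lemma a_mem : a ∈ G := Subgroup.subset_closure (Set.mem_insert _ _)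

lemma b_mem : b ∈ G := Subgroup.subset_closure (Set.mem_insert_of_mem _ rfl)

end T8

namespace T8

/-! Words in the generators `a`, `b`, `b⁻¹`. -/

/-- The three letters `a`, `b`, `b⁻¹`. -/
inductive Letter
  | A : Letter
  | B : Letter
  | Bi : Letter
deriving DecidableEq

/-- Evaluation of a letter in `Aut(T₈)`. -/
def evalLetter : Letter → Aut
  | .A => a
  | .B => b
  | .Bi => b⁻¹

/-- Evaluation of a word in `Aut(T₈)` (letters are composed left-to-right). -/
def evalWord (w : List Letter) : Aut := (w.map evalLetter).prod

/-- The ball of radius `n` in `G` with respect to the generating set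
`{a, b, b⁻¹}`: elements expressible by a word of length at most `n`. -/
def ball (n : ℕ) : Set Aut := {g | ∃ w : List Letter, evalWord w = g ∧ w.length ≤ n}

/-- The number of occurrences of the letter `a` in a word. -/
def aCount (w : List Letter) : ℕ := w.count .A

/-- The root permutation of a letter. -/
def letterRoot : Letter → Equiv.Perm (Fin 8)
  | .A => σa
  | .B => σb
  | .Bi => σb⁻¹

/-- The (syntactic) section of a letter at a first-level vertex, read off
from the defining wreath recursions of `a`, `b` and `b⁻¹`. -/
def letterSect : Letter → Fin 8 → List Letter
  | .A, i => if i = 0 then [.A] else []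
  | .B, i => if i = 6 then [.B] else if i = 7 then [.Bi] else []
  | .Bi, i => if i = 6 then [.Bi] else if i = 7 then [.B] else []

/-- The (syntactic) section of a word at a first-level vertex `i`, computed
by the wreath recursion (letters applied left-to-right). -/
def wordSect : List Letter → Fin 8 → List Letter
  | [], _ => []
  | x :: u, i => letterSect x i ++ wordSect u (letterRoot x i)

/-- The free product `(ℤ/2ℤ) ∗ (ℤ/3ℤ)`. -/
abbrev FP := Monoid.Coprod (Multiplicative (ZMod 2)) (Multiplicative (ZMod 3))

/-- Evaluation of a letter in the free product `(ℤ/2ℤ) ∗ (ℤ/3ℤ)`: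
`a` is the generator of `ℤ/2ℤ`, `b` a generator of `ℤ/3ℤ`. -/
def letterFP : Letter → FP
  | .A => Monoid.Coprod.inl (Multiplicative.ofAdd (1 : ZMod 2))
  | .B => Monoid.Coprod.inr (Multiplicative.ofAdd (1 : ZMod 3))
  | .Bi => Monoid.Coprod.inr (Multiplicative.ofAdd (2 : ZMod 3))

/-- Evaluation of a word in the free product `(ℤ/2ℤ) ∗ (ℤ/3ℤ)`. -/
def evalFP (w : List Letter) : FP := (w.map letterFP).prod

/-- The number of occurrences of the letter `a` in the free reduction of a
word, i.e. in the normal form of the corresponding element of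
`(ℤ/2ℤ) ∗ (ℤ/3ℤ)`: equivalently, the least number of `a`'s among all words
representing this element. -/
noncomputable def aLen (g : FP) : ℕ := sInf {n | ∃ u : List Letter, evalFP u = g ∧ aCount u = n}

/-- `powW u n` is the word `u^n`. -/
def powW (u : List Letter) (n : ℕ) : List Letter := (List.replicate n u).flatten

/-- The word `(ab)^p (ab⁻¹)^q`. -/
def blockW (pq : ℕ × ℕ) : List Letter := powW [.A, .B] pq.1 ++ powW [.A, .Bi] pq.2

/-- The word `b^{ε₁} (ab)^{p₁} (ab⁻¹)^{q₁} ⋯ (ab)^{p_k} (ab⁻¹)^{q_k} a^{ε₂}`,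
where `e₁ ∈ {[], [b], [b⁻¹]}` and `e₂ ∈ {[], [a]}` encode `b^{ε₁}` and
`a^{ε₂}`. -/
def formWord (e₁ : List Letter) (pqs : List (ℕ × ℕ)) (e₂ : List Letter) : List Letter :=
  e₁ ++ (pqs.map blockW).flatten ++ e₂

/-- All `pᵢ, qᵢ` are positive, except possibly `p₁` and `q_k`. -/
def InnerPos (pqs : List (ℕ × ℕ)) : Prop :=
  ∀ (k : ℕ) (hk : k < pqs.length),
    (k ≠ 0 → 1 ≤ (pqs.get ⟨k, hk⟩).1) ∧ (k + 1 ≠ pqs.length → 1 ≤ (pqs.get ⟨k, hk⟩).2)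

end T8

namespace T8


/-! ### Auxiliary development -/

/-- The portrait of `b⁻¹`. -/
def c : Aut := ⟨bval false⟩

lemma a_val_nil : a.val [] = σa := rfl
lemma b_val_nil : b.val [] = σb := rfl
lemma c_val_nil : c.val [] = σb⁻¹ := rfl

lemma a_val_cons (i : Fin 8) (v : List (Fin 8)) :
    a.val (i :: v) = if i = 0 then a.val v else 1 := rfl

lemma b_val_cons (i : Fin 8) (v : List (Fin 8)) :
    b.val (i :: v) = if i = 6 then b.val v else if i = 7 then c.val v else 1 := rfl

lemma c_val_cons (i : Fin 8) (v : List (Fin 8)) :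
    c.val (i :: v) = if i = 6 then c.val v else if i = 7 then b.val v else 1 := rfl

lemma sect_b_seven : sect b 7 = c := rfl
lemma sect_c_six : sect c 6 = c := rfl
lemma sect_c_seven : sect c 7 = b := rfl

lemma σa_eq_zero {i : Fin 8} : σa i = 0 ↔ i = 0 :=
  ⟨fun h => by rw [← σa.symm_apply_apply i, h]; decide, fun h => by subst h; decide⟩

lemma σb_eq_six {i : Fin 8} : σb i = 6 ↔ i = 6 :=
  ⟨fun h => by rw [← σb.symm_apply_apply i, h]; decide, fun h => by subst h; decide⟩

lemma σb_eq_seven {i : Fin 8} : σb i = 7 ↔ i = 7 :=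
  ⟨fun h => by rw [← σb.symm_apply_apply i, h]; decide, fun h => by subst h; decide⟩

lemma mulval_cons (p q : Aut) (i : Fin 8) (t : List (Fin 8)) :
    (p * q).val (i :: t) = q.val (p.val [] i :: act (sect p i) t) * p.val (i :: t) := rfl

lemma aa_val : ∀ v : List (Fin 8), (a * a).val v = 1 := by
  intro v
  induction v with
  | nil => decide
  | cons i t ih =>
    rw [mulval_cons, a_val_cons, a_val_cons]
    rcases eq_or_ne i 0 with h | h
    · subst h
      rw [show a.val [] (0 : Fin 8) = 0 from by decide, if_pos rfl, if_pos rfl, sect_a_zero]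
      exact ih
    · rw [if_neg h, if_neg (show ¬ a.val [] i = 0 from fun h' => h (σa_eq_zero.mp h')),
        one_mul]

lemma bc_val : ∀ v : List (Fin 8), (b * c).val v = 1 ∧ (c * b).val v = 1 := by
  intro v
  induction v with
  | nil => constructor <;> decide
  | cons i t ih =>
    have hb : b.val [] = σb := rfl
    have hc6 : ∀ j : Fin 8, σb⁻¹ j = 6 ↔ j = 6 := by decide
    have hc7 : ∀ j : Fin 8, σb⁻¹ j = 7 ↔ j = 7 := by decide
    constructor
    · rw [mulval_cons, c_val_cons, b_val_cons, hb]
      rcases eq_or_ne i 6 with h | h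
      · subst h
        rw [if_pos (σb_eq_six.mpr rfl), if_pos rfl, sect_b_six]
        exact ih.1
      rcases eq_or_ne i 7 with h7 | h7
      · subst h7
        rw [if_neg (fun h' => h (σb_eq_six.mp h')), if_pos (σb_eq_seven.mpr rfl),
          if_neg h, if_pos rfl, sect_b_seven]
        exact ih.2
      · rw [if_neg (fun h' => h (σb_eq_six.mp h')), if_neg (fun h' => h7 (σb_eq_seven.mp h')),
          if_neg h, if_neg h7, one_mul]
    · rw [mulval_cons, b_val_cons, c_val_cons, c_val_nil]
      rcases eq_or_ne i 6 with h | h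
      · subst h
        rw [if_pos ((hc6 6).mpr rfl), if_pos rfl, sect_c_six]
        exact ih.2
      rcases eq_or_ne i 7 with h7 | h7
      · subst h7
        rw [if_neg (fun h' => h ((hc6 7).mp h')), if_pos ((hc7 7).mpr rfl),
          if_neg h, if_pos rfl, sect_c_seven]
        exact ih.1
      · rw [if_neg (fun h' => h ((hc6 i).mp h')), if_neg (fun h' => h7 ((hc7 i).mp h')),
          if_neg h, if_neg h7, one_mul]

lemma bb_val : ∀ v : List (Fin 8), (b * b).val v = c.val v ∧ (c * c).val v = b.val v := by
  intro v
  induction v with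
  | nil => constructor <;> decide
  | cons i t ih =>
    have hb : b.val [] = σb := rfl
    have hc6 : ∀ j : Fin 8, σb⁻¹ j = 6 ↔ j = 6 := by decide
    have hc7 : ∀ j : Fin 8, σb⁻¹ j = 7 ↔ j = 7 := by decide
    constructor
    · rw [mulval_cons, b_val_cons, b_val_cons, hb, c_val_cons]
      rcases eq_or_ne i 6 with h | h
      · subst h
        rw [if_pos (σb_eq_six.mpr rfl), if_pos rfl, if_pos rfl, sect_b_six]
        exact ih.1
      rcases eq_or_ne i 7 with h7 | h7
      · subst h7
        rw [if_neg (fun h' => h (σb_eq_six.mp h')), if_pos (σb_eq_seven.mpr rfl),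
          if_neg h, if_pos rfl, if_neg h, if_pos rfl, sect_b_seven]
        exact ih.2
      · rw [if_neg (fun h' => h (σb_eq_six.mp h')), if_neg (fun h' => h7 (σb_eq_seven.mp h')),
          if_neg h, if_neg h7, if_neg h, if_neg h7, one_mul]
    · rw [mulval_cons, c_val_cons, c_val_cons, c_val_nil, b_val_cons]
      rcases eq_or_ne i 6 with h | h
      · subst h
        rw [if_pos ((hc6 6).mpr rfl), if_pos rfl, if_pos rfl, sect_c_six]
        exact ih.2
      rcases eq_or_ne i 7 with h7 | h7
      · subst h7
        rw [if_neg (fun h' => h ((hc6 7).mp h')), if_pos ((hc7 7).mpr rfl),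
          if_neg h, if_pos rfl, if_neg h, if_pos rfl, sect_c_seven]
        exact ih.1
      · rw [if_neg (fun h' => h ((hc6 i).mp h')), if_neg (fun h' => h7 ((hc7 i).mp h')),
          if_neg h, if_neg h7, if_neg h, if_neg h7, one_mul]

lemma haa : a * a = 1 := Aut.ext (funext fun v => aa_val v)
lemma hbc : b * c = 1 := Aut.ext (funext fun v => (bc_val v).1)
lemma hcb : c * b = 1 := Aut.ext (funext fun v => (bc_val v).2)
lemma hbb : b * b = c := Aut.ext (funext fun v => (bb_val v).1)
lemma hcc : c * c = b := Aut.ext (funext fun v => (bb_val v).2)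

lemma hbinv : b⁻¹ = c := inv_eq_of_mul_eq_one_right hbc
lemma hainv : a⁻¹ = a := inv_eq_of_mul_eq_one_right haa


/-! ### Word machinery -/

@[simp] lemma evalWord_nil : evalWord [] = 1 := rfl

@[simp] lemma evalWord_cons (x : Letter) (u : List Letter) :
    evalWord (x :: u) = evalLetter x * evalWord u := by
  simp [evalWord]

@[simp] lemma evalWord_append (u v : List Letter) :
    evalWord (u ++ v) = evalWord u * evalWord v := by
  simp [evalWord]

lemma evalLetter_root (x : Letter) : (evalLetter x).val [] = letterRoot x := by
  cases x with
  | A => rfl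
  | B => rfl
  | Bi => show (b⁻¹).val [] = σb⁻¹; rw [hbinv]; rfl

lemma sect_evalLetter (x : Letter) (i : Fin 8) :
    sect (evalLetter x) i = evalWord (letterSect x i) := by
  cases x with
  | A =>
    show sect a i = evalWord (if i = 0 then [.A] else [])
    rcases eq_or_ne i 0 with h | h
    · subst h; rw [if_pos rfl, sect_a_zero]; simp [evalLetter]
    · rw [if_neg h]
      apply Aut.ext; funext v
      show a.val (i :: v) = 1
      rw [a_val_cons, if_neg h]
  | B =>
    show sect b i = evalWord (if i = 6 then [.B] else if i = 7 then [.Bi] else [])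
    rcases eq_or_ne i 6 with h | h
    · subst h; rw [if_pos rfl, sect_b_six]; simp [evalLetter]
    rcases eq_or_ne i 7 with h7 | h7
    · subst h7; rw [if_neg h, if_pos rfl, sect_b_seven]; simp [evalLetter, hbinv]
    · rw [if_neg h, if_neg h7]
      apply Aut.ext; funext v
      show b.val (i :: v) = 1
      rw [b_val_cons, if_neg h, if_neg h7]
  | Bi =>
    have hc : evalLetter Letter.Bi = c := by show b⁻¹ = c; exact hbinv
    rw [hc]
    show sect c i = evalWord (if i = 6 then [.Bi] else if i = 7 then [.B] else [])
    rcases eq_or_ne i 6 with h | h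
    · subst h; rw [if_pos rfl, sect_c_six]; simp [evalLetter, hbinv]
    rcases eq_or_ne i 7 with h7 | h7
    · subst h7; rw [if_neg h, if_pos rfl, sect_c_seven]; simp [evalLetter]
    · rw [if_neg h, if_neg h7]
      apply Aut.ext; funext v
      show c.val (i :: v) = 1
      rw [c_val_cons, if_neg h, if_neg h7]

lemma sect_evalWord : ∀ (w : List Letter) (i : Fin 8),
    sect (evalWord w) i = evalWord (wordSect w i) := by
  intro w
  induction w with
  | nil => intro i; rfl
  | cons x u ih =>
    intro i
    rw [evalWord_cons, wordSect, evalWord_append, sect_mul, sect_evalLetter,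
      evalLetter_root, ih]

/-- The root permutation of a word (letters applied left to right). -/
def rootWord : List Letter → Equiv.Perm (Fin 8)
  | [] => 1
  | x :: u => rootWord u * letterRoot x

lemma evalWord_root : ∀ w : List Letter, (evalWord w).val [] = rootWord w := by
  intro w
  induction w with
  | nil => rfl
  | cons x u ih =>
    rw [evalWord_cons, rootWord, ← ih, ← evalLetter_root]
    rfl

/-- An automorphism with trivial root permutation and trivial first-level
sections is trivial. -/
lemma eq_one_of_sect (p : Aut) (hroot : p.val [] = 1) (hsect : ∀ i, sect p i = 1) :
    p = 1 := by
  apply Aut.ext; funext v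
  cases v with
  | nil => exact hroot
  | cons i t => show (sect p i).val t = 1; rw [hsect]; rfl

@[simp] lemma powW_zero (u : List Letter) : powW u 0 = [] := rfl

lemma powW_succ (u : List Letter) (n : ℕ) : powW u (n + 1) = u ++ powW u n := rfl

lemma powW_add (u : List Letter) (m n : ℕ) :
    powW u (m + n) = powW u m ++ powW u n := by
  induction m with
  | zero => simp
  | succ m ih => rw [Nat.succ_add, powW_succ, powW_succ, ih, List.append_assoc]

lemma powW_succ' (u : List Letter) (n : ℕ) : powW u (n + 1) = powW u n ++ u := by
  rw [powW_add, powW_succ, powW_zero, List.append_nil]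

lemma evalWord_powW (u : List Letter) (n : ℕ) :
    evalWord (powW u n) = (evalWord u) ^ n := by
  induction n with
  | zero => simp
  | succ n ih => rw [powW_succ, evalWord_append, ih, pow_succ']

lemma length_powW (u : List Letter) (n : ℕ) : (powW u n).length = n * u.length := by
  induction n with
  | zero => simp
  | succ n ih => rw [powW_succ, List.length_append, ih]; ring

set_option maxRecDepth 8000 in
/-- The main relation: `(ab)^16 = 1`. -/
lemma ab_pow16 : (a * b) ^ 16 = 1 := by
  have hW : evalWord (powW [.A, .B] 16) = (a * b) ^ 16 := by
    rw [evalWord_powW]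
    congr 1
  rw [← hW]
  apply eq_one_of_sect
  · rw [evalWord_root]
    decide
  · intro i
    rw [sect_evalWord]
    have e1 : evalWord [.A, .Bi, .B, .A, .Bi, .B] = 1 := by
      simp [evalLetter, ← mul_assoc, haa]
    have e2 : evalWord [.Bi, .B, .A, .Bi, .B, .A] = 1 := by
      simp [evalLetter, ← mul_assoc, haa]
    have e3 : evalWord [.B, .A, .Bi, .B, .A, .Bi] = 1 := by
      simp [evalLetter, ← mul_assoc, haa]
    fin_cases i
    · exact (by decide : wordSect (powW [.A, .B] 16) 0 = [.A, .Bi, .B, .A, .Bi, .B]) ▸ e1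
    · exact (by decide : wordSect (powW [.A, .B] 16) 1 = [.Bi, .B, .A, .Bi, .B, .A]) ▸ e2
    · exact (by decide : wordSect (powW [.A, .B] 16) 2 = [.Bi, .B, .A, .Bi, .B, .A]) ▸ e2
    · exact (by decide : wordSect (powW [.A, .B] 16) 3 = [.A, .Bi, .B, .A, .Bi, .B]) ▸ e1
    · exact (by decide : wordSect (powW [.A, .B] 16) 4 = [.Bi, .B, .A, .Bi, .B, .A]) ▸ e2
    · exact (by decide : wordSect (powW [.A, .B] 16) 5 = [.B, .A, .Bi, .B, .A, .Bi]) ▸ e3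
    · exact (by decide : wordSect (powW [.A, .B] 16) 6 = [.A, .Bi, .B, .A, .Bi, .B]) ▸ e1
    · exact (by decide : wordSect (powW [.A, .B] 16) 7 = [.B, .A, .Bi, .B, .A, .Bi]) ▸ e3


lemma pow8_self_inv {x : Aut} (h : x ^ 16 = 1) : x ^ 8 = (x⁻¹) ^ 8 := by
  rw [inv_pow]
  exact eq_inv_of_mul_eq_one_left (by rw [← pow_add]; exact h)

lemma ba_pow16 : (b * a) ^ 16 = 1 := by
  have h : b * a = a * (a * b) * a⁻¹ := by
    rw [hainv, ← mul_assoc, haa, one_mul]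
  rw [h, conj_pow, ab_pow16, mul_one, hainv, haa]

lemma evalW_AB : evalWord [Letter.A, Letter.B] = a * b := by
  simp [evalLetter]
lemma evalW_BiA : evalWord [Letter.Bi, Letter.A] = b⁻¹ * a := by
  simp [evalLetter]
lemma evalW_ABi : evalWord [Letter.A, Letter.Bi] = a * b⁻¹ := by
  simp [evalLetter]
lemma evalW_BA : evalWord [Letter.B, Letter.A] = b * a := by
  simp [evalLetter]

/-- `(ab)^8 = (b⁻¹a)^8`. -/
lemma e8 : evalWord (powW [Letter.A, Letter.B] 8) = evalWord (powW [Letter.Bi, Letter.A] 8) := by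
  rw [evalWord_powW, evalWord_powW, evalW_AB, evalW_BiA,
    pow8_self_inv ab_pow16, mul_inv_rev, hainv]

/-- `(ab⁻¹)^8 = (ba)^8`. -/
lemma e8' : evalWord (powW [Letter.A, Letter.Bi] 8) = evalWord (powW [Letter.B, Letter.A] 8) := by
  rw [evalWord_powW, evalWord_powW, evalW_ABi, evalW_BA]
  have : a * b⁻¹ = (b * a)⁻¹ := by rw [mul_inv_rev, hainv]
  rw [this, ← pow8_self_inv ba_pow16]

/-! ### Representability and minimal words -/

def invLetter : Letter → Letter
  | .A => .A
  | .B => .Bi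
  | .Bi => .B

lemma evalLetter_inv (x : Letter) : evalLetter (invLetter x) = (evalLetter x)⁻¹ := by
  cases x with
  | A => exact hainv.symm
  | B => rfl
  | Bi => exact (inv_inv b).symm

lemma evalWord_invWord (w : List Letter) :
    evalWord ((w.map invLetter).reverse) = (evalWord w)⁻¹ := by
  induction w with
  | nil => simp
  | cons x u ih => simp [ih, evalLetter_inv]

lemma exists_word {g : Aut} (hg : g ∈ G) : ∃ w : List Letter, evalWord w = g := by
  induction hg using Subgroup.closure_induction with
  | mem x hx =>
    rcases hx with h | h
    · exact ⟨[.A], by simp [evalLetter, h]⟩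
    · rw [Set.mem_singleton_iff] at h
      exact ⟨[.B], by simp [evalLetter, h]⟩
  | one => exact ⟨[], rfl⟩
  | mul x y _ _ hx hy =>
    obtain ⟨u, hu⟩ := hx; obtain ⟨v, hv⟩ := hy
    exact ⟨u ++ v, by simp [hu, hv]⟩
  | inv x _ hx =>
    obtain ⟨u, hu⟩ := hx
    exact ⟨(u.map invLetter).reverse, by rw [evalWord_invWord, hu]⟩

/-- A word is minimal if no shorter word evaluates to the same element. -/
def Minimal (w : List Letter) : Prop :=
  ∀ u : List Letter, evalWord u = evalWord w → w.length ≤ u.length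

lemma exists_minimal_word {g : Aut} (hg : g ∈ G) :
    ∃ w : List Letter, evalWord w = g ∧ Minimal w := by
  obtain ⟨w₀, hw₀⟩ := exists_word hg
  have hne : w₀.length ∈ {n | ∃ w : List Letter, evalWord w = g ∧ w.length = n} :=
    ⟨w₀, hw₀, rfl⟩
  obtain ⟨w, hw, hlen⟩ := Nat.sInf_mem (Set.nonempty_of_mem hne)
  refine ⟨w, hw, fun u hu => ?_⟩
  have : u.length ∈ {n | ∃ w : List Letter, evalWord w = g ∧ w.length = n} :=
    ⟨u, by rw [hu, hw], rfl⟩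
  calc w.length = _ := hlen
    _ ≤ u.length := Nat.sInf_le this

lemma Minimal.tail {x : Letter} {w : List Letter} (h : Minimal (x :: w)) : Minimal w := by
  intro u hu
  have := h (x :: u) (by simp [hu])
  simpa using this

/-- The alternation relation: one of the two letters is `a`, the other not. -/
def alt (x y : Letter) : Prop := (x = .A ↔ ¬ y = .A)

lemma minimal_chain : ∀ w : List Letter, Minimal w → List.Chain' alt w := by
  intro w
  induction w with
  | nil => intro _; exact List.isChain_nil
  | cons x tl ih =>
    intro h
    cases tl with
    | nil => exact List.isChain_singleton x
    | cons y t =>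
      rw [List.Chain', List.isChain_cons_cons]
      refine ⟨?_, ih h.tail⟩
      have hAA : evalWord (Letter.A :: Letter.A :: t) = evalWord t := by
        simp [evalLetter, ← mul_assoc, haa]
      have hBBi : evalWord (Letter.B :: Letter.Bi :: t) = evalWord t := by
        simp [evalLetter, ← mul_assoc]
      have hBiB : evalWord (Letter.Bi :: Letter.B :: t) = evalWord t := by
        simp [evalLetter, ← mul_assoc]
      have hBB : evalWord (Letter.B :: Letter.B :: t) = evalWord (Letter.Bi :: t) := by
        simp [evalLetter, ← mul_assoc, hbb, hbinv]
      have hBiBi : evalWord (Letter.Bi :: Letter.Bi :: t) = evalWord (Letter.B :: t) := by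
        simp [evalLetter, ← mul_assoc, hbinv, hcc]
      cases x with
      | A =>
        cases y with
        | A => exact absurd (h t hAA.symm) (by simp only [List.length_cons]; omega)
        | B => simp [alt]
        | Bi => simp [alt]
      | B =>
        cases y with
        | A => simp [alt]
        | B => exact absurd (h _ hBB.symm) (by simp only [List.length_cons]; omega)
        | Bi => exact absurd (h t hBBi.symm) (by simp only [List.length_cons]; omega)
      | Bi =>
        cases y with
        | A => simp [alt]
        | B => exact absurd (h t hBiB.symm) (by simp only [List.length_cons]; omega)
        | Bi => exact absurd (h _ hBiBi.symm) (by simp only [List.length_cons]; omega)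


/-! ### Parsing alternating words into blocks -/

def dec (pqs : List (ℕ × ℕ)) : List Letter := (pqs.map blockW).flatten

def addB : List (ℕ × ℕ) → List (ℕ × ℕ)
  | [] => [(1, 0)]
  | (p, q) :: r => (p + 1, q) :: r

def addBi : List (ℕ × ℕ) → List (ℕ × ℕ)
  | [] => [(0, 1)]
  | (p, q) :: r => if p = 0 then (0, q + 1) :: r else (0, 1) :: (p, q) :: r

lemma blockW_succ_left (p q : ℕ) :
    blockW (p + 1, q) = [Letter.A, Letter.B] ++ blockW (p, q) := by
  simp [blockW, powW_succ]

lemma blockW_zero_succ (q : ℕ) :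
    blockW (0, q + 1) = [Letter.A, Letter.Bi] ++ blockW (0, q) := by
  simp [blockW, powW_succ]

lemma dec_cons (x : ℕ × ℕ) (r : List (ℕ × ℕ)) : dec (x :: r) = blockW x ++ dec r := by
  simp [dec]

lemma dec_addB (pqs : List (ℕ × ℕ)) :
    dec (addB pqs) = [Letter.A, Letter.B] ++ dec pqs := by
  cases pqs with
  | nil => decide
  | cons x r =>
    obtain ⟨p, q⟩ := x
    rw [addB, dec_cons, dec_cons, blockW_succ_left, List.append_assoc]

lemma dec_addBi (pqs : List (ℕ × ℕ)) :
    dec (addBi pqs) = [Letter.A, Letter.Bi] ++ dec pqs := by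
  cases pqs with
  | nil => decide
  | cons x r =>
    obtain ⟨p, q⟩ := x
    rcases eq_or_ne p 0 with h | h
    · subst h
      rw [addBi, if_pos rfl, dec_cons, dec_cons, blockW_zero_succ, List.append_assoc]
    · rw [addBi, if_neg h, dec_cons,
        show blockW (0, 1) = [Letter.A, Letter.Bi] from by decide]

/-- A recursive version of `InnerPos`. -/
def IP : List (ℕ × ℕ) → Prop
  | [] => True
  | [_] => True
  | x :: y :: r => 1 ≤ x.2 ∧ 1 ≤ y.1 ∧ IP (y :: r)

lemma IP_addB {l : List (ℕ × ℕ)} (h : IP l) : IP (addB l) := by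
  cases l with
  | nil => trivial
  | cons x r =>
    obtain ⟨p, q⟩ := x
    cases r with
    | nil => trivial
    | cons y s => exact ⟨h.1, h.2.1, h.2.2⟩

lemma IP_addBi {l : List (ℕ × ℕ)} (h : IP l) : IP (addBi l) := by
  cases l with
  | nil => trivial
  | cons x r =>
    obtain ⟨p, q⟩ := x
    rcases eq_or_ne p 0 with hp | hp
    · subst hp
      rw [addBi, if_pos rfl]
      cases r with
      | nil => trivial
      | cons y s => exact ⟨Nat.succ_le_succ (Nat.zero_le _), h.2.1, h.2.2⟩
    · rw [addBi, if_neg hp]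
      exact ⟨le_refl 1, Nat.one_le_iff_ne_zero.mpr hp, h⟩

lemma IP.innerPos : ∀ l : List (ℕ × ℕ), IP l → InnerPos l := by
  intro l
  induction l with
  | nil => intro _ k hk; exact absurd hk (by simp)
  | cons x r ih =>
    intro h k hk
    cases r with
    | nil =>
      have hk0 : k = 0 := by simp only [List.length_cons, List.length_nil] at hk; omega
      subst hk0
      exact ⟨fun h0 => absurd rfl h0, fun hlen => absurd rfl hlen⟩
    | cons y s =>
      obtain ⟨hq, hy, hr⟩ := h
      cases k with
      | zero => exact ⟨fun h0 => absurd rfl h0, fun _ => hq⟩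
      | succ k =>
        have hk' : k < (y :: s).length := by
          simpa [Nat.succ_lt_succ_iff] using hk
        have hget : (x :: y :: s).get ⟨k + 1, hk⟩ = (y :: s).get ⟨k, hk'⟩ := rfl
        rw [hget]
        constructor
        · intro _
          cases k with
          | zero => exact hy
          | succ m => exact (ih hr (m + 1) hk').1 (by omega)
        · intro hlen
          exact (ih hr k hk').2 (by simpa [Nat.succ_ne_succ] using hlen)

lemma parseA : ∀ (n : ℕ) (w : List Letter), w.length ≤ n → List.Chain' alt w →
    (w = [] ∨ w.head? = some .A) →
    ∃ (pqs : List (ℕ × ℕ)) (e₂ : List Letter),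
      (e₂ = [] ∨ e₂ = [.A]) ∧ IP pqs ∧ w = dec pqs ++ e₂ := by
  intro n
  induction n with
  | zero =>
    intro w hw _ _
    have : w = [] := List.eq_nil_of_length_eq_zero (Nat.le_zero.mp hw)
    exact ⟨[], [], Or.inl rfl, trivial, by simp [this, dec]⟩
  | succ n ih =>
    intro w hw hch hhd
    cases w with
    | nil => exact ⟨[], [], Or.inl rfl, trivial, by simp [dec]⟩
    | cons x w' =>
      have hx : x = .A := by
        rcases hhd with h | h
        · exact absurd h (by simp)
        · simpa using h
      subst hx
      cases w' with
      | nil => exact ⟨[], [.A], Or.inr rfl, trivial, by simp [dec]⟩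
      | cons y w'' =>
        rw [List.Chain', List.isChain_cons_cons] at hch
        obtain ⟨hxy, hch'⟩ := hch
        have hyA : y ≠ .A := (show (Letter.A = .A ↔ ¬ y = .A) from hxy).mp rfl
        have hhd'' : w'' = [] ∨ w''.head? = some .A := by
          cases w'' with
          | nil => exact Or.inl rfl
          | cons z t =>
            right
            rw [List.isChain_cons_cons] at hch'
            have hz : z = .A := by
              by_contra hz
              exact hyA ((show (y = .A ↔ ¬ z = .A) from hch'.1).mpr hz)
            simp [hz]
        have hch'' : List.Chain' alt w'' := hch'.tail
        obtain ⟨pqs, e₂, he₂, hip, hw''⟩ :=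
          ih w'' (by simp only [List.length_cons] at hw ⊢; omega) hch'' hhd''
        cases y with
        | A => exact absurd rfl hyA
        | B =>
          refine ⟨addB pqs, e₂, he₂, IP_addB hip, ?_⟩
          rw [dec_addB, hw'']
          simp
        | Bi =>
          refine ⟨addBi pqs, e₂, he₂, IP_addBi hip, ?_⟩
          rw [dec_addBi, hw'']
          simp

lemma formWord_eq (e₁ : List Letter) (pqs : List (ℕ × ℕ)) (e₂ : List Letter) :
    formWord e₁ pqs e₂ = e₁ ++ dec pqs ++ e₂ := rfl

lemma parseW (w : List Letter) (hch : List.Chain' alt w) :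
    ∃ (e₁ : List Letter) (pqs : List (ℕ × ℕ)) (e₂ : List Letter),
      (e₁ = [] ∨ e₁ = [.B] ∨ e₁ = [.Bi]) ∧ (e₂ = [] ∨ e₂ = [.A]) ∧ IP pqs ∧
      w = formWord e₁ pqs e₂ := by
  have tailhead : ∀ (x : Letter) (w' : List Letter), List.Chain' alt (x :: w') → x ≠ .A →
      w' = [] ∨ w'.head? = some .A := by
    intro x w' hc hx
    cases w' with
    | nil => exact Or.inl rfl
    | cons z t =>
      right
      rw [List.Chain', List.isChain_cons_cons] at hc
      have hz : z = .A := by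
        by_contra hz
        exact hx ((show (x = .A ↔ ¬ z = .A) from hc.1).mpr hz)
      simp [hz]
  cases w with
  | nil => exact ⟨[], [], [], Or.inl rfl, Or.inl rfl, trivial, by simp [formWord_eq, dec]⟩
  | cons x w' =>
    cases x with
    | A =>
      obtain ⟨pqs, e₂, he₂, hip, hw⟩ :=
        parseA (w'.length + 1) (.A :: w') (by simp) hch (Or.inr rfl)
      exact ⟨[], pqs, e₂, Or.inl rfl, he₂, hip, by simpa [formWord_eq] using hw⟩
    | B =>
      obtain ⟨pqs, e₂, he₂, hip, hw⟩ :=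
        parseA w'.length w' le_rfl hch.tail (tailhead _ _ hch (by simp))
      exact ⟨[.B], pqs, e₂, Or.inr (Or.inl rfl), he₂, hip,
        by rw [formWord_eq, hw]; simp⟩
    | Bi =>
      obtain ⟨pqs, e₂, he₂, hip, hw⟩ :=
        parseA w'.length w' le_rfl hch.tail (tailhead _ _ hch (by simp))
      exact ⟨[.Bi], pqs, e₂, Or.inr (Or.inr rfl), he₂, hip,
        by rw [formWord_eq, hw]; simp⟩


/-! ### Bounding the exponents -/

lemma dec_nil : dec [] = [] := rfl

lemma dec_append (s t : List (ℕ × ℕ)) : dec (s ++ t) = dec s ++ dec t := by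
  simp [dec]

lemma blockW_pair (pq : ℕ × ℕ) :
    blockW pq = powW [Letter.A, Letter.B] pq.1 ++ powW [Letter.A, Letter.Bi] pq.2 := rfl

lemma IP_cons_of_ne {x : ℕ × ℕ} {r : List (ℕ × ℕ)} (hr : r ≠ []) (h : IP (x :: r)) :
    1 ≤ x.2 ∧ IP r := by
  cases r with
  | nil => exact absurd rfl hr
  | cons y s => exact ⟨h.1, h.2.2⟩

lemma IP_tail_p : ∀ (x : ℕ × ℕ) (r : List (ℕ × ℕ)), IP (x :: r) → ∀ z ∈ r, 1 ≤ z.1 := by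
  intro x r
  induction r generalizing x with
  | nil => intro _ z hz; simp at hz
  | cons y s ih =>
    intro h z hz
    rcases List.mem_cons.mp hz with rfl | hz'
    · exact h.2.1
    · exact ih y h.2.2 z hz'

lemma IP_split : ∀ (L : List (ℕ × ℕ)) (pq : ℕ × ℕ) (R : List (ℕ × ℕ)),
    IP (L ++ pq :: R) →
    (∀ x ∈ L, 1 ≤ x.2) ∧ (∀ x ∈ R, 1 ≤ x.1) ∧ (L ≠ [] → 1 ≤ pq.1) ∧ (R ≠ [] → 1 ≤ pq.2) := by
  intro L
  induction L with
  | nil =>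
    intro pq R h
    refine ⟨by simp, IP_tail_p pq R h, fun h' => absurd rfl h', fun hR => ?_⟩
    cases R with
    | nil => exact absurd rfl hR
    | cons y s => exact h.1
  | cons x L' ih =>
    intro pq R h
    have hne : L' ++ pq :: R ≠ [] := by simp
    obtain ⟨hx2, h'⟩ := IP_cons_of_ne hne h
    obtain ⟨hL', hR, hpq1, hpq2⟩ := ih pq R h'
    refine ⟨?_, hR, fun _ => ?_, hpq2⟩
    · intro z hz
      rcases List.mem_cons.mp hz with rfl | hz'
      · exact hx2
      · exact hL' z hz'
    · cases L' with
      | nil => exact h.2.1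
      | cons u v => exact hpq1 (by simp)

lemma decR_head (R : List (ℕ × ℕ)) (hp : ∀ x ∈ R, 1 ≤ x.1) :
    dec R = [] ∨ ∃ v, dec R = .A :: v := by
  cases R with
  | nil => exact Or.inl rfl
  | cons r R' =>
    right
    have h1 : 1 ≤ r.1 := hp r (by simp)
    obtain ⟨p', hp'⟩ : ∃ p', r.1 = p' + 1 := ⟨r.1 - 1, by omega⟩
    refine ⟨.B :: (powW [.A, .B] p' ++ (powW [.A, .Bi] r.2 ++ dec R')), ?_⟩
    rw [dec_cons, blockW_pair, hp', powW_succ]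
    simp [List.append_assoc]

lemma pre_shape (e₁ : List Letter) (he₁ : e₁ = [] ∨ e₁ = [.B] ∨ e₁ = [.Bi])
    (L : List (ℕ × ℕ)) (hL : ∀ x ∈ L, 1 ≤ x.2) :
    e₁ ++ dec L = [] ∨
      ∃ u, e₁ ++ dec L = u ++ [Letter.B] ∨ e₁ ++ dec L = u ++ [Letter.Bi] := by
  rcases L.eq_nil_or_concat with rfl | ⟨L', l, rfl⟩
  · rcases he₁ with rfl | rfl | rfl
    · exact Or.inl rfl
    · exact Or.inr ⟨[], Or.inl (by simp [dec_nil])⟩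
    · exact Or.inr ⟨[], Or.inr (by simp [dec_nil])⟩
  · right
    have hl : 1 ≤ l.2 := hL l (by simp)
    obtain ⟨q', hq'⟩ : ∃ q', l.2 = q' + 1 := ⟨l.2 - 1, by omega⟩
    refine ⟨e₁ ++ (dec L' ++ (powW [.A, .B] l.1 ++ (powW [.A, .Bi] q' ++ [.A]))), Or.inr ?_⟩
    have hbl : blockW l = powW [.A, .B] l.1 ++ (powW [.A, .Bi] q' ++ [.A, .Bi]) := by
      rw [blockW_pair, hq', powW_succ']
    rw [List.concat_eq_append, dec_append, dec_cons, dec_nil, hbl]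
    simp [List.append_assoc]

lemma not_min (pre suf m₁ m₂ : List Letter) (w : List Letter) (hmin : Minimal w)
    (hw : w = pre ++ (m₁ ++ suf)) (h : evalWord m₁ = evalWord m₂)
    (hlt : m₂.length < m₁.length) : False := by
  have h2 : evalWord (pre ++ (m₂ ++ suf)) = evalWord w := by
    rw [hw]; simp only [evalWord_append, h]
  have := hmin _ h2
  rw [hw] at this
  simp only [List.length_append] at this
  omega

lemma hbb2 : b * b = b⁻¹ := by rw [hbb, hbinv]
lemma hbinv2 : (b⁻¹ : Aut) * b⁻¹ = b := by rw [hbinv]; exact hcc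

lemma m1 : evalWord ([.B] ++ powW [.A, .B] 8) = evalWord ([.A] ++ powW [.Bi, .A] 7) := by
  rw [evalWord_append, evalWord_append, e8,
    show powW [Letter.Bi, Letter.A] 8 = [Letter.Bi, Letter.A] ++ powW [Letter.Bi, Letter.A] 7
      from by decide, evalWord_append, ← mul_assoc]
  congr 1
  simp [evalLetter]

lemma m2 : evalWord ([.Bi] ++ powW [.A, .B] 8) = evalWord ([.B, .A] ++ powW [.Bi, .A] 7) := by
  rw [evalWord_append, evalWord_append, e8,
    show powW [Letter.Bi, Letter.A] 8 = [Letter.Bi, Letter.A] ++ powW [Letter.Bi, Letter.A] 7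
      from by decide, evalWord_append, ← mul_assoc]
  congr 1
  simp [evalLetter, ← mul_assoc, hbinv2]

lemma m3 : evalWord (powW [.A, .B] 8 ++ [.A]) = evalWord (powW [.Bi, .A] 7 ++ [.Bi]) := by
  rw [evalWord_append, evalWord_append, e8,
    show powW [Letter.Bi, Letter.A] 8 = powW [Letter.Bi, Letter.A] 7 ++ [Letter.Bi, Letter.A]
      from by decide, evalWord_append, mul_assoc]
  congr 1
  simp only [evalWord_cons, evalWord_nil, evalLetter, mul_one]
  rw [mul_assoc, haa, mul_one]

lemma m1' : evalWord ([.B] ++ powW [.A, .Bi] 8) = evalWord ([.Bi, .A] ++ powW [.B, .A] 7) := by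
  rw [evalWord_append, evalWord_append, e8',
    show powW [Letter.B, Letter.A] 8 = [Letter.B, Letter.A] ++ powW [Letter.B, Letter.A] 7
      from by decide, evalWord_append, ← mul_assoc]
  congr 1
  simp [evalLetter, ← mul_assoc, hbb2]

lemma m2' : evalWord ([.Bi] ++ powW [.A, .Bi] 8) = evalWord ([.A] ++ powW [.B, .A] 7) := by
  rw [evalWord_append, evalWord_append, e8',
    show powW [Letter.B, Letter.A] 8 = [Letter.B, Letter.A] ++ powW [Letter.B, Letter.A] 7
      from by decide, evalWord_append, ← mul_assoc]
  congr 1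
  simp [evalLetter]

lemma m3' : evalWord (powW [.A, .Bi] 8 ++ [.A]) = evalWord (powW [.B, .A] 7 ++ [.B]) := by
  rw [evalWord_append, evalWord_append, e8',
    show powW [Letter.B, Letter.A] 8 = powW [Letter.B, Letter.A] 7 ++ [Letter.B, Letter.A]
      from by decide, evalWord_append, mul_assoc]
  congr 1
  simp only [evalWord_cons, evalWord_nil, evalLetter, mul_one]
  rw [mul_assoc, haa, mul_one]

lemma bound_p (w : List Letter) (hmin : Minimal w) {e₁ e₂ : List Letter}
    {L R : List (ℕ × ℕ)} {pq : ℕ × ℕ}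
    (he₁ : e₁ = [] ∨ e₁ = [.B] ∨ e₁ = [.Bi]) (he₂ : e₂ = [] ∨ e₂ = [.A])
    (hip : IP (L ++ pq :: R)) (hw : w = formWord e₁ (L ++ pq :: R) e₂)
    (hbig : 8 ≤ pq.1) : w = powW [.A, .B] 8 := by
  obtain ⟨hL2, hR1, _, _⟩ := IP_split L pq R hip
  obtain ⟨m, hm⟩ : ∃ m, pq.1 = 8 + m := ⟨pq.1 - 8, by omega⟩
  set S : List Letter := powW [.A, .B] m ++ (powW [.A, .Bi] pq.2 ++ (dec R ++ e₂)) with hS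
  have hw2 : w = (e₁ ++ dec L) ++ (powW [.A, .B] 8 ++ S) := by
    rw [hw, formWord_eq, dec_append, dec_cons, blockW_pair, hm, powW_add, hS]
    simp [List.append_assoc]
  have hsuf : S = [] ∨ ∃ v, S = .A :: v := by
    cases m with
    | succ m' =>
      right
      exact ⟨.B :: (powW [.A, .B] m' ++ (powW [.A, .Bi] pq.2 ++ (dec R ++ e₂))),
        by rw [hS, powW_succ]; rfl⟩
    | zero =>
      cases hq : pq.2 with
      | succ q' =>
        right
        exact ⟨.Bi :: (powW [.A, .Bi] q' ++ (dec R ++ e₂)),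
          by rw [hS, hq, powW_zero, powW_succ]; rfl⟩
      | zero =>
        rcases decR_head R hR1 with hd | ⟨v, hd⟩
        · rcases he₂ with rfl | rfl
          · left; rw [hS, hq, hd]; rfl
          · right; exact ⟨[], by rw [hS, hq, hd]; rfl⟩
        · right; exact ⟨v ++ e₂, by rw [hS, hq, hd]; rfl⟩
  rcases pre_shape e₁ he₁ L hL2 with hpre | ⟨u, hpre | hpre⟩
  · rcases hsuf with hS0 | ⟨v, hSv⟩
    · rw [hw2, hpre, hS0]; simp
    · exact (not_min [] v _ _ w hmin
        (by rw [hw2, hpre, hSv]; simp [List.append_assoc]) m3 (by decide)).elim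
  · exact (not_min u S _ _ w hmin
      (by rw [hw2, hpre]; simp [List.append_assoc]) m1 (by decide)).elim
  · exact (not_min u S _ _ w hmin
      (by rw [hw2, hpre]; simp [List.append_assoc]) m2 (by decide)).elim

lemma bound_q (w : List Letter) (hmin : Minimal w) {e₁ e₂ : List Letter}
    {L R : List (ℕ × ℕ)} {pq : ℕ × ℕ}
    (he₁ : e₁ = [] ∨ e₁ = [.B] ∨ e₁ = [.Bi]) (he₂ : e₂ = [] ∨ e₂ = [.A])
    (hip : IP (L ++ pq :: R)) (hw : w = formWord e₁ (L ++ pq :: R) e₂)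
    (hbig : 8 ≤ pq.2) : w = powW [.A, .Bi] 8 := by
  obtain ⟨hL2, hR1, hL1, _⟩ := IP_split L pq R hip
  obtain ⟨m, hm⟩ : ∃ m, pq.2 = 8 + m := ⟨pq.2 - 8, by omega⟩
  set P : List Letter := e₁ ++ (dec L ++ powW [.A, .B] pq.1) with hP
  set S : List Letter := powW [.A, .Bi] m ++ (dec R ++ e₂) with hS
  have hw2 : w = P ++ (powW [.A, .Bi] 8 ++ S) := by
    rw [hw, formWord_eq, dec_append, dec_cons, blockW_pair, hm, powW_add, hS, hP]
    simp [List.append_assoc]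
  have hsuf : S = [] ∨ ∃ v, S = .A :: v := by
    cases m with
    | succ m' =>
      right
      exact ⟨.Bi :: (powW [.A, .Bi] m' ++ (dec R ++ e₂)), by rw [hS, powW_succ]; rfl⟩
    | zero =>
      rcases decR_head R hR1 with hd | ⟨v, hd⟩
      · rcases he₂ with rfl | rfl
        · left; rw [hS, hd]; rfl
        · right; exact ⟨[], by rw [hS, hd]; rfl⟩
      · right; exact ⟨v ++ e₂, by rw [hS, hd]; rfl⟩
  have hpre : P = [] ∨ ∃ u, P = u ++ [Letter.B] ∨ P = u ++ [Letter.Bi] := by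
    cases hp : pq.1 with
    | zero =>
      have hL0 : L = [] := by
        by_contra hL0
        have := hL1 hL0
        omega
      rcases he₁ with rfl | rfl | rfl
      · left; rw [hP, hL0, hp, dec_nil, powW_zero]; rfl
      · exact Or.inr ⟨[], Or.inl (by rw [hP, hL0, hp, dec_nil, powW_zero]; rfl)⟩
      · exact Or.inr ⟨[], Or.inr (by rw [hP, hL0, hp, dec_nil, powW_zero]; rfl)⟩
    | succ p' =>
      refine Or.inr ⟨e₁ ++ (dec L ++ (powW [.A, .B] p' ++ [.A])), Or.inl ?_⟩
      rw [hP, hp, powW_succ']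
      simp [List.append_assoc]
  rcases hpre with hpre | ⟨u, hpre | hpre⟩
  · rcases hsuf with hS0 | ⟨v, hSv⟩
    · rw [hw2, hpre, hS0]; simp
    · exact (not_min [] v _ _ w hmin
        (by rw [hw2, hpre, hSv]; simp [List.append_assoc]) m3' (by decide)).elim
  · exact (not_min u S _ _ w hmin
      (by rw [hw2, hpre]; simp [List.append_assoc]) m1' (by decide)).elim
  · exact (not_min u S _ _ w hmin
      (by rw [hw2, hpre]; simp [List.append_assoc]) m2' (by decide)).elim

/-- every element of `G` admits a minimal length representative
word in `a, b, b⁻¹` of the form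
`b^{ε₁}(ab)^{p₁}(ab⁻¹)^{q₁}⋯(ab)^{p_k}(ab⁻¹)^{q_k}a^{ε₂}` with
`ε₁, ε₂ ∈ {-1,0,1}`, where all the positive integers `pᵢ, qᵢ` (possibly `p₁`
or `q_k` being zero) are at most `7`, with the only exceptions being the four
words `(ab)^8`, `(ba)^8`, `(b⁻¹a)^8` and `(ab⁻¹)^8`. -/
theorem stmt_12 :
    ∀ g ∈ G, ∃ w : List Letter,
      evalWord w = g ∧
      (∀ u : List Letter, evalWord u = g → w.length ≤ u.length) ∧
      ((∃ (e₁ e₂ : List Letter) (pqs : List (ℕ × ℕ)),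
          (e₁ = [] ∨ e₁ = [.B] ∨ e₁ = [.Bi]) ∧ (e₂ = [] ∨ e₂ = [.A]) ∧
          (∀ pq ∈ pqs, pq.1 ≤ 7 ∧ pq.2 ≤ 7) ∧ InnerPos pqs ∧
          w = formWord e₁ pqs e₂) ∨
        w = powW [.A, .B] 8 ∨ w = powW [.B, .A] 8 ∨
        w = powW [.Bi, .A] 8 ∨ w = powW [.A, .Bi] 8) := by
  intro g hg
  obtain ⟨w, hwg, hmin⟩ := exists_minimal_word hg
  obtain ⟨e₁, pqs, e₂, he₁, he₂, hip, hform⟩ := parseW w (minimal_chain w hmin)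
  refine ⟨w, hwg, fun u hu => hmin u (hu.trans hwg.symm), ?_⟩
  by_cases hb : ∀ pq ∈ pqs, pq.1 ≤ 7 ∧ pq.2 ≤ 7
  · exact Or.inl ⟨e₁, e₂, pqs, he₁, he₂, hb, IP.innerPos pqs hip, hform⟩
  · push_neg at hb
    obtain ⟨pq, hmem, hbig⟩ := hb
    obtain ⟨L, R, hLR⟩ := List.append_of_mem hmem
    subst hLR
    rcases le_or_gt pq.1 7 with h1 | h1
    · have h8 : 8 ≤ pq.2 := by have := hbig h1; omega
      exact Or.inr (Or.inr (Or.inr (Or.inr (bound_q w hmin he₁ he₂ hip hform h8))))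
    · have h8 : 8 ≤ pq.1 := by omega
      exact Or.inr (Or.inl (bound_p w hmin he₁ he₂ hip hform h8))

end T8
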